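/- Let d ≥ 1 and let s = (s_1,…,s_d) be a strictly increasing sequence of positive integers with s_1 = 2 and s_{i+1} ≤ 2 s_i for all 1 ≤ i ≤ d−1 (so that P_d^{(s)} has the unique interior lattice point p with p_i = s_i − 1), and set Q = P_d^{(s)} − p. Then the dual polytope Q^∨ = {y ∈ ℝ^d : ⟨x,y⟩ ≤ 1 for all x ∈ Q} is a lattice polytope, i.e. Q^∨ = conv(Q^∨ ∩ ℤ^d), if and only if for every 1 ≤ i ≤ d−1 the integer k_i = s_{i+1} − s_i divides both s_i and s_{i+1}. -/

import Mathlib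

open Pointwise BigOperators

/-- The `s`-lecture hall polytope
`P_d^(s) = {x ∈ ℝ^d : 0 ≤ x_1/s_1 ≤ x_2/s_2 ≤ ⋯ ≤ x_d/s_d ≤ 1}`
(indices shifted down by one: `x i` is the paper's `x_{i+1}`). -/
def lectureHall (d : ℕ) (s : Fin d → ℕ) : Set (Fin d → ℝ) :=
  {x | (∀ h : 0 < d, 0 ≤ x ⟨0, h⟩ / (s ⟨0, h⟩ : ℝ)) ∧
       (∀ i : Fin d, ∀ hi : (i : ℕ) + 1 < d,
          x i / (s i : ℝ) ≤ x ⟨(i : ℕ) + 1, hi⟩ / (s ⟨(i : ℕ) + 1, hi⟩ : ℝ)) ∧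
       (∀ h : 0 < d,
          x ⟨d - 1, Nat.sub_lt h Nat.one_pos⟩ / (s ⟨d - 1, Nat.sub_lt h Nat.one_pos⟩ : ℝ) ≤ 1)}

/-- The set of lattice points of `ℝ^d`. -/
def latticePoints (d : ℕ) : Set (Fin d → ℝ) := {x | ∀ i, ∃ n : ℤ, x i = (n : ℝ)}

/-- The dual polytope `Q^∨ = {y : ⟨x,y⟩ ≤ 1 for all x ∈ Q}`. -/
def dualPolytope {d : ℕ} (Q : Set (Fin d → ℝ)) : Set (Fin d → ℝ) :=
  {y | ∀ x ∈ Q, ∑ i, x i * y i ≤ 1}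

/-- A full-dimensional lattice polytope is reflexive if it is Fano (the only
lattice point of its interior is the origin) and its dual polytope is a lattice
polytope. -/
def IsReflexive {d : ℕ} (Q : Set (Fin d → ℝ)) : Prop :=
  interior Q ∩ latticePoints d = {0} ∧
  dualPolytope Q = convexHull ℝ (dualPolytope Q ∩ latticePoints d)

/-- Unimodular equivalence: `Q = f_U(P) + w` with `U` an integer matrix of
determinant `±1` and `w` an integer vector. -/
def UnimodularlyEquivalent {d : ℕ} (P Q : Set (Fin d → ℝ)) : Prop :=
  ∃ (U : Matrix (Fin d) (Fin d) ℤ) (w : Fin d → ℤ),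
    (U.det = 1 ∨ U.det = -1) ∧
    Q = (fun x => Matrix.vecMul x (U.map (fun a : ℤ => (a : ℝ))) + fun i => (w i : ℝ)) '' P

/-- `P` is Gorenstein of index `c`: `c` is the smallest positive integer such
that `cP` is unimodularly equivalent to a reflexive polytope. -/
def GorensteinOfIndex {d : ℕ} (P : Set (Fin d → ℝ)) (c : ℕ) : Prop :=
  0 < c ∧
  (∃ Q : Set (Fin d → ℝ), UnimodularlyEquivalent ((c : ℝ) • P) Q ∧ IsReflexive Q) ∧
  ∀ c' : ℕ, 0 < c' →
    (∃ Q : Set (Fin d → ℝ), UnimodularlyEquivalent ((c' : ℝ) • P) Q ∧ IsReflexive Q) →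
    c ≤ c'

/-- `P` is translation equivalent to a reflexive polytope. -/
def TranslationReflexive {d : ℕ} (P : Set (Fin d → ℝ)) : Prop :=
  ∃ w : Fin d → ℤ, IsReflexive ((fun x => x + fun i => (w i : ℝ)) '' P)

/-- With the conventions `e_0 = 0`, `s_0 = 1`, every position `0,…,d-1` of the
`s`-inversion sequence `e` is an ascent (`e i` is the paper's `e_{i+1}`). -/
def allAscents (d : ℕ) (s : Fin d → ℕ) (e : Fin d → ℤ) : Prop :=
  (∀ h : 0 < d, (0 : ℝ) / 1 < (e ⟨0, h⟩ : ℝ) / (s ⟨0, h⟩ : ℝ)) ∧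
  ∀ i : Fin d, ∀ hi : (i : ℕ) + 1 < d,
    (e i : ℝ) / (s i : ℝ) < (e ⟨(i : ℕ) + 1, hi⟩ : ℝ) / (s ⟨(i : ℕ) + 1, hi⟩ : ℝ)

/-- The integer decomposition property. -/
def HasIDP (d : ℕ) (P : Set (Fin d → ℝ)) : Prop :=
  ∀ k : ℕ, 0 < k → ∀ z : Fin d → ℤ,
    (fun i => (z i : ℝ)) ∈ (k : ℝ) • P →
    ∃ x : Fin k → Fin d → ℤ,
      (∀ j, (fun i => (x j i : ℝ)) ∈ P) ∧ ∀ i, (∑ j, x j i) = z i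

namespace Stmt2Aux

noncomputable def S (d : ℕ) (s : Fin d → ℕ) : ℕ → ℝ :=
  fun n => if h : n ≠ 0 ∧ n - 1 < d then (s ⟨n - 1, h.2⟩ : ℝ) else 1

variable {d : ℕ} {s : Fin d → ℕ}

lemma S_zero : S d s 0 = 1 := by simp [S]

lemma S_succ {n : ℕ} (h : n < d) : S d s (n + 1) = (s ⟨n, h⟩ : ℝ) := by
  simp [S, h]

lemma s_cast (i : Fin d) : (s i : ℝ) = S d s ((i : ℕ) + 1) := by
  rw [S_succ i.isLt]

lemma S_pos (hpos : ∀ i, 0 < s i) (n : ℕ) : 0 < S d s n := by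
  unfold S
  split
  · exact_mod_cast hpos _
  · norm_num

lemma S_lt (hd : 0 < d) (hinc : StrictMono s) (h1 : s ⟨0, hd⟩ = 2) {n : ℕ} (h : n < d) :
    S d s n < S d s (n + 1) := by
  rcases n with _ | m
  · rw [S_zero, S_succ h]
    have : (⟨0, h⟩ : Fin d) = ⟨0, hd⟩ := rfl
    rw [this, h1]; norm_num
  · have hm : m < d := Nat.lt_of_succ_lt h
    rw [S_succ hm, S_succ h]
    exact_mod_cast hinc (show (⟨m, hm⟩ : Fin d) < ⟨m + 1, h⟩ from by simp [Fin.lt_def])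

noncomputable def kk (d : ℕ) (s : Fin d → ℕ) (n : ℕ) : ℝ := S d s (n + 1) - S d s n

lemma kk_pos (hd : 0 < d) (hinc : StrictMono s) (h1 : s ⟨0, hd⟩ = 2) {n : ℕ} (h : n < d) :
    0 < kk d s n := sub_pos.2 (S_lt hd hinc h1 h)

noncomputable def Wv (d : ℕ) (s : Fin d → ℕ) : Fin (d + 1) → Fin d → ℝ :=
  fun f j => if (f : ℕ) ≤ (j : ℕ) then S d s ((j : ℕ) + 1) else 0

noncomputable def wv (d : ℕ) (s : Fin d → ℕ) : Fin (d + 1) → Fin d → ℝ :=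
  fun f j => Wv d s f j - (S d s ((j : ℕ) + 1) - 1)

noncomputable def av (d : ℕ) (s : Fin d → ℕ) : Fin (d + 1) → Fin d → ℝ :=
  fun f j =>
    (if (f : ℕ) = (j : ℕ) then -(S d s (j : ℕ)) / kk d s (j : ℕ) else 0) +
    (if (f : ℕ) = (j : ℕ) + 1 then
      (if (j : ℕ) + 1 = d then 1 else S d s ((j : ℕ) + 2) / kk d s ((j : ℕ) + 1)) else 0)

noncomputable def munat (d : ℕ) (s : Fin d → ℕ) : ℕ → ℝ :=
  fun n => if n = d then 1 / S d s d else 1 / S d s n - 1 / S d s (n + 1)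

noncomputable def mu (d : ℕ) (s : Fin d → ℕ) : Fin (d + 1) → ℝ := fun f => munat d s (f : ℕ)

noncomputable def phi (d : ℕ) (s : Fin d → ℕ) (f : Fin (d + 1)) (y : Fin d → ℝ) : ℝ :=
  ∑ j, wv d s f j * y j

noncomputable def lam (d : ℕ) (s : Fin d → ℕ) (f : Fin (d + 1)) (y : Fin d → ℝ) : ℝ :=
  mu d s f * (1 - phi d s f y)

lemma sum_ite_coe {m : ℕ} (c : ℕ) (hc : c < m) (g : Fin m → ℝ) :
    ∑ j : Fin m, (if (j : ℕ) = c then g j else 0) = g ⟨c, hc⟩ := by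
  rw [Finset.sum_eq_single ⟨c, hc⟩]
  · simp
  · intro b _ hb
    have : (b : ℕ) ≠ c := fun h => hb (by simpa [Fin.ext_iff] using h)
    simp [this]
  · simp

lemma sum_ite_coe_zero {m : ℕ} (c : ℕ) (hc : ¬ c < m) (g : Fin m → ℝ) :
    ∑ j : Fin m, (if (j : ℕ) = c then g j else 0) = 0 := by
  apply Finset.sum_eq_zero
  intro b _
  have hb : (b : ℕ) ≠ c := by have := b.isLt; omega
  simp [hb]


lemma sum_mu (hpos : ∀ i, 0 < s i) : ∑ f : Fin (d + 1), mu d s f = 1 := by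
  have e1 : ∑ f : Fin (d + 1), mu d s f = ∑ n ∈ Finset.range (d + 1), munat d s n :=
    Fin.sum_univ_eq_sum_range (munat d s) (d + 1)
  rw [e1, Finset.sum_range_succ]
  have e2 : ∑ n ∈ Finset.range d, munat d s n
      = ∑ n ∈ Finset.range d, (1 / S d s n - 1 / S d s (n + 1)) := by
    apply Finset.sum_congr rfl
    intro n hn
    have : n ≠ d := by simp at hn; omega
    simp [munat, this]
  rw [e2, Finset.sum_range_sub' (fun n => 1 / S d s n)]
  simp [munat, S_zero]

lemma sum_mu_le {j : ℕ} (hj : j < d) :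
    ∑ f : Fin (d + 1), (if (f : ℕ) ≤ j then mu d s f else 0) = 1 - 1 / S d s (j + 1) := by
  have e1 : ∑ f : Fin (d + 1), (if (f : ℕ) ≤ j then mu d s f else 0)
      = ∑ n ∈ Finset.range (d + 1), (if n ≤ j then munat d s n else 0) :=
    Fin.sum_univ_eq_sum_range (fun n => if n ≤ j then munat d s n else 0) (d + 1)
  rw [e1, ← Finset.sum_subset (Finset.range_subset_range.2 (by omega : j + 1 ≤ d + 1))
    (by intro x _ hx; simp at hx ⊢; intro hxj; omega)]
  have e2 : ∑ n ∈ Finset.range (j + 1), (if n ≤ j then munat d s n else 0)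
      = ∑ n ∈ Finset.range (j + 1), (1 / S d s n - 1 / S d s (n + 1)) := by
    apply Finset.sum_congr rfl
    intro n hn
    simp at hn
    have h1 : n ≤ j := by omega
    have h2 : n ≠ d := by omega
    simp [h1, munat, h2]
  rw [e2, Finset.sum_range_sub' (fun n => 1 / S d s n)]
  simp [S_zero]

lemma sum_mu_wv (hpos : ∀ i, 0 < s i) (j : Fin d) :
    ∑ f : Fin (d + 1), mu d s f * wv d s f j = 0 := by
  have hSj : S d s ((j : ℕ) + 1) ≠ 0 := ne_of_gt (S_pos hpos _)
  have e0 : ∀ f : Fin (d + 1), mu d s f * wv d s f j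
      = (if (f : ℕ) ≤ (j : ℕ) then mu d s f else 0) * S d s ((j : ℕ) + 1)
        - mu d s f * (S d s ((j : ℕ) + 1) - 1) := by
    intro f
    simp only [wv, Wv]
    split <;> ring
  rw [Finset.sum_congr rfl fun f _ => e0 f, Finset.sum_sub_distrib, ← Finset.sum_mul,
    ← Finset.sum_mul, sum_mu_le j.isLt, sum_mu hpos]
  field_simp
  ring

lemma mu_av_left (hd : 0 < d) (hpos : ∀ i, 0 < s i) (hinc : StrictMono s)
    (h1 : s ⟨0, hd⟩ = 2) (j : Fin d) :
    munat d s (j : ℕ) * (-(S d s (j : ℕ)) / kk d s (j : ℕ)) = -(1 / S d s ((j : ℕ) + 1)) := by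
  have hjd : (j : ℕ) ≠ d := by have := j.isLt; omega
  have h0 : S d s (j : ℕ) ≠ 0 := ne_of_gt (S_pos hpos _)
  have h0' : S d s ((j : ℕ) + 1) ≠ 0 := ne_of_gt (S_pos hpos _)
  have hk : kk d s (j : ℕ) ≠ 0 := ne_of_gt (kk_pos hd hinc h1 j.isLt)
  simp only [munat, hjd, if_false, kk] at *
  field_simp

lemma mu_av_right (hd : 0 < d) (hpos : ∀ i, 0 < s i) (hinc : StrictMono s)
    (h1 : s ⟨0, hd⟩ = 2) (j : Fin d) :
    munat d s ((j : ℕ) + 1) *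
      (if (j : ℕ) + 1 = d then 1 else S d s ((j : ℕ) + 2) / kk d s ((j : ℕ) + 1))
      = 1 / S d s ((j : ℕ) + 1) := by
  by_cases hc : (j : ℕ) + 1 = d
  · simp [munat, hc]
  · have hjd : (j : ℕ) + 1 < d := by have := j.isLt; omega
    have h0 : S d s ((j : ℕ) + 1) ≠ 0 := ne_of_gt (S_pos hpos _)
    have h0' : S d s ((j : ℕ) + 2) ≠ 0 := ne_of_gt (S_pos hpos _)
    have hk : kk d s ((j : ℕ) + 1) ≠ 0 := ne_of_gt (kk_pos hd hinc h1 hjd)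
    simp only [munat, hc, if_false, kk] at *
    field_simp

lemma phi_sub (y : Fin d → ℝ) (j : Fin d) :
    phi d s ⟨(j : ℕ), Nat.lt_succ_of_lt j.isLt⟩ y
      - phi d s ⟨(j : ℕ) + 1, Nat.succ_lt_succ j.isLt⟩ y
      = S d s ((j : ℕ) + 1) * y j := by
  have e0 : ∀ i : Fin d,
      wv d s ⟨(j : ℕ), Nat.lt_succ_of_lt j.isLt⟩ i * y i
        - wv d s ⟨(j : ℕ) + 1, Nat.succ_lt_succ j.isLt⟩ i * y i
      = (if (i : ℕ) = (j : ℕ) then S d s ((i : ℕ) + 1) * y i else 0) := by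
    intro i
    simp only [wv, Wv]
    rcases lt_trichotomy (i : ℕ) (j : ℕ) with h | h | h
    · rw [if_neg (by omega), if_neg (by omega), if_neg (by omega)]
      ring
    · rw [if_pos (by omega), if_neg (by omega), if_pos (by omega)]
      ring
    · rw [if_pos (by omega), if_pos (by omega), if_neg (by omega)]
      ring
  unfold phi
  rw [← Finset.sum_sub_distrib, Finset.sum_congr rfl fun i _ => e0 i,
    sum_ite_coe (j : ℕ) j.isLt]

lemma sum_lam_av (hd : 0 < d) (hpos : ∀ i, 0 < s i) (hinc : StrictMono s)
    (h1 : s ⟨0, hd⟩ = 2) (y : Fin d → ℝ) (j : Fin d) :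
    ∑ f : Fin (d + 1), lam d s f y * av d s f j = y j := by
  have e0 : ∀ f : Fin (d + 1), lam d s f y * av d s f j
      = (if (f : ℕ) = (j : ℕ) then
          lam d s f y * (-(S d s (j : ℕ)) / kk d s (j : ℕ)) else 0)
        + (if (f : ℕ) = (j : ℕ) + 1 then
          lam d s f y *
            (if (j : ℕ) + 1 = d then 1 else S d s ((j : ℕ) + 2) / kk d s ((j : ℕ) + 1)) else 0) := by
    intro f
    simp only [av]
    split <;> split <;> ring
  rw [Finset.sum_congr rfl fun f _ => e0 f, Finset.sum_add_distrib,
    sum_ite_coe (j : ℕ) (Nat.lt_succ_of_lt j.isLt),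
    sum_ite_coe ((j : ℕ) + 1) (Nat.succ_lt_succ j.isLt)]
  simp only [lam, mu]
  have key : (munat d s (j : ℕ) * (-(S d s (j : ℕ)) / kk d s (j : ℕ)))
        * (1 - phi d s ⟨(j : ℕ), Nat.lt_succ_of_lt j.isLt⟩ y)
      + (munat d s ((j : ℕ) + 1) *
          (if (j : ℕ) + 1 = d then 1 else S d s ((j : ℕ) + 2) / kk d s ((j : ℕ) + 1)))
        * (1 - phi d s ⟨(j : ℕ) + 1, Nat.succ_lt_succ j.isLt⟩ y) = y j := by
    rw [mu_av_left hd hpos hinc h1 j, mu_av_right hd hpos hinc h1 j]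
    have := phi_sub (s := s) y j
    have hS : S d s ((j : ℕ) + 1) ≠ 0 := ne_of_gt (S_pos hpos _)
    field_simp
    nlinarith [this]
  calc munat d s ↑(⟨(j : ℕ), Nat.lt_succ_of_lt j.isLt⟩ : Fin (d + 1)) *
        (1 - phi d s ⟨(j : ℕ), Nat.lt_succ_of_lt j.isLt⟩ y) *
        (-(S d s (j : ℕ)) / kk d s (j : ℕ))
      + munat d s ↑(⟨(j : ℕ) + 1, Nat.succ_lt_succ j.isLt⟩ : Fin (d + 1)) *
        (1 - phi d s ⟨(j : ℕ) + 1, Nat.succ_lt_succ j.isLt⟩ y) *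
        (if (j : ℕ) + 1 = d then 1 else S d s ((j : ℕ) + 2) / kk d s ((j : ℕ) + 1))
      = _ := by ring
    _ = y j := key

lemma sum_lam (hpos : ∀ i, 0 < s i) (y : Fin d → ℝ) :
    ∑ f : Fin (d + 1), lam d s f y = 1 := by
  have e0 : ∀ f : Fin (d + 1), lam d s f y = mu d s f - ∑ i, (mu d s f * wv d s f i) * y i := by
    intro f
    simp only [lam, phi, mul_one_sub, Finset.mul_sum]
    congr 1
    apply Finset.sum_congr rfl
    intro i _
    ring
  rw [Finset.sum_congr rfl fun f _ => e0 f, Finset.sum_sub_distrib, sum_mu hpos,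
    Finset.sum_comm]
  have : ∀ i : Fin d, ∑ f : Fin (d + 1), (mu d s f * wv d s f i) * y i = 0 := by
    intro i
    rw [← Finset.sum_mul, sum_mu_wv hpos i, zero_mul]
  rw [Finset.sum_congr rfl fun i _ => this i]
  simp


lemma mu_pos (hd : 0 < d) (hpos : ∀ i, 0 < s i) (hinc : StrictMono s)
    (h1 : s ⟨0, hd⟩ = 2) (f : Fin (d + 1)) : 0 < mu d s f := by
  unfold mu munat
  split
  · exact one_div_pos.2 (S_pos hpos _)
  · have hf : (f : ℕ) < d := by have := f.isLt; omega
    have := S_lt hd hinc h1 hf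
    have h0 := S_pos hpos (f : ℕ)
    have h1' := S_pos hpos ((f : ℕ) + 1)
    have := one_div_lt_one_div_of_lt h0 this
    linarith

lemma dual_convex {Q : Set (Fin d → ℝ)} : Convex ℝ (dualPolytope Q) := by
  intro y1 hy1 y2 hy2 α β hα hβ hab x hx
  have e0 : ∀ i, x i * (α • y1 + β • y2) i = α * (x i * y1 i) + β * (x i * y2 i) := by
    intro i
    simp only [Pi.add_apply, Pi.smul_apply, smul_eq_mul]
    ring
  rw [Finset.sum_congr rfl fun i _ => e0 i, Finset.sum_add_distrib, ← Finset.mul_sum,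
    ← Finset.mul_sum]
  have g1 := hy1 x hx
  have g2 := hy2 x hx
  nlinarith

lemma Wv_mem (hpos : ∀ i, 0 < s i) (f : Fin (d + 1)) : Wv d s f ∈ lectureHall d s := by
  refine ⟨?_, ?_, ?_⟩
  · intro h
    apply div_nonneg _ (Nat.cast_nonneg _)
    unfold Wv
    split
    · exact (S_pos hpos _).le
    · exact le_rfl
  · intro i hi
    unfold Wv
    by_cases hfi : (f : ℕ) ≤ (i : ℕ)
    · rw [if_pos hfi, if_pos (show (f : ℕ) ≤ ((⟨(i : ℕ) + 1, hi⟩ : Fin d) : ℕ) by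
        simpa using Nat.le_succ_of_le hfi)]
      have e1 : S d s ((i : ℕ) + 1) / (s i : ℝ) = 1 := by
        rw [s_cast]; exact div_self (ne_of_gt (S_pos hpos _))
      have e2 : S d s (((⟨(i : ℕ) + 1, hi⟩ : Fin d) : ℕ) + 1) / (s ⟨(i : ℕ) + 1, hi⟩ : ℝ) = 1 := by
        rw [s_cast]; exact div_self (ne_of_gt (S_pos hpos _))
      rw [e1, e2]
    · rw [if_neg hfi, zero_div]
      apply div_nonneg _ (Nat.cast_nonneg _)
      split
      · exact (S_pos hpos _).le
      · exact le_rfl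
  · intro h
    unfold Wv
    split
    · rw [s_cast]
      exact le_of_eq (div_self (ne_of_gt (S_pos hpos _)))
    · rw [zero_div]; norm_num

lemma wv_mem (hpos : ∀ i, 0 < s i) (f : Fin (d + 1)) :
    wv d s f ∈ (fun x (i : Fin d) => x i - ((s i : ℝ) - 1)) '' lectureHall d s := by
  refine ⟨Wv d s f, Wv_mem hpos f, ?_⟩
  funext i
  show Wv d s f i - ((s i : ℝ) - 1) = wv d s f i
  rw [s_cast]
  rfl

lemma av_mem_dual (hd : 0 < d) (hpos : ∀ i, 0 < s i) (hinc : StrictMono s)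
    (h1 : s ⟨0, hd⟩ = 2) (f : Fin (d + 1)) :
    av d s f ∈ dualPolytope ((fun x (i : Fin d) => x i - ((s i : ℝ) - 1)) '' lectureHall d s) := by
  rintro x ⟨v, hv, rfl⟩
  obtain ⟨hv0, hvm, hv1⟩ := hv
  simp only
  by_cases hf0 : (f : ℕ) = 0
  · have e0 : ∀ i : Fin d, (v i - ((s i : ℝ) - 1)) * av d s f i
        = (if (i : ℕ) = 0 then -(v i - ((s i : ℝ) - 1)) * (S d s (i : ℕ) / kk d s (i : ℕ)) else 0) := by
      intro i
      simp only [av, hf0]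
      split_ifs <;> first | ring1 | contradiction | (exfalso; omega)
    rw [Finset.sum_congr rfl fun i _ => e0 i, sum_ite_coe 0 hd]
    have hs0 : (s ⟨0, hd⟩ : ℝ) = 2 := by rw [h1]; norm_num
    have hS1 : S d s 1 = 2 := by exact (S_succ hd).trans hs0
    have hk0 : kk d s 0 = 1 := by rw [kk, hS1, S_zero]; norm_num
    have hv00 : 0 ≤ v ⟨0, hd⟩ := by
      have h := hv0 hd
      rw [hs0] at h
      nlinarith
    rw [S_zero, hk0, hs0]
    nlinarith
  · by_cases hfd : (f : ℕ) = d
    · have e0 : ∀ i : Fin d, (v i - ((s i : ℝ) - 1)) * av d s f i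
          = (if (i : ℕ) = d - 1 then v i - ((s i : ℝ) - 1) else 0) := by
        intro i
        have hid := i.isLt
        simp only [av, hfd]
        split_ifs <;> first | ring1 | contradiction | (exfalso; omega)
      rw [Finset.sum_congr rfl fun i _ => e0 i, sum_ite_coe (d - 1) (Nat.sub_lt hd Nat.one_pos)]
      have h := hv1 hd
      have hs : (0 : ℝ) < (s ⟨d - 1, Nat.sub_lt hd Nat.one_pos⟩ : ℝ) := by
        exact_mod_cast hpos _
      rw [div_le_one hs] at h
      linarith
    · -- middle case : 0 < f < d
      obtain ⟨m, hm⟩ : ∃ m, (f : ℕ) = m + 1 := ⟨(f : ℕ) - 1, by omega⟩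
      have hmd : m + 1 < d := by have := f.isLt; omega
      have hmd' : m < d := by omega
      have e0 : ∀ i : Fin d, (v i - ((s i : ℝ) - 1)) * av d s f i
          = (if (i : ℕ) = m + 1 then
              -(v i - ((s i : ℝ) - 1)) * (S d s ((i : ℕ)) / kk d s ((i : ℕ))) else 0)
            + (if (i : ℕ) = m then
              (v i - ((s i : ℝ) - 1)) * (S d s ((i : ℕ) + 2) / kk d s ((i : ℕ) + 1)) else 0) := by
        intro i
        simp only [av, hm]
        split_ifs <;> first | ring1 | contradiction | (exfalso; omega)
      rw [Finset.sum_congr rfl fun i _ => e0 i, Finset.sum_add_distrib,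
        sum_ite_coe (m + 1) hmd, sum_ite_coe m hmd']
      -- notation
      set i0 : Fin d := ⟨m, hmd'⟩
      set i1 : Fin d := ⟨m + 1, hmd⟩
      have hs0 : (s i0 : ℝ) = S d s (m + 1) := by rw [S_succ hmd']
      have hs1 : (s i1 : ℝ) = S d s (m + 2) := by rw [S_succ hmd]
      have hcross : v i0 * S d s (m + 2) ≤ v i1 * S d s (m + 1) := by
        have h := hvm i0 hmd
        have h0 : (0 : ℝ) < (s i0 : ℝ) := by exact_mod_cast hpos _
        have h1' : (0 : ℝ) < (s i1 : ℝ) := by exact_mod_cast hpos _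
        rw [div_le_div_iff₀ h0 h1'] at h
        rw [← hs0, ← hs1]
        linarith [h]
      have hk : 0 < kk d s (m + 1) := kk_pos hd hinc h1 hmd
      have hkk : kk d s (m + 1) = S d s (m + 2) - S d s (m + 1) := rfl
      have eq1 : -(v i1 - ((s i1 : ℝ) - 1)) * (S d s ((i1 : ℕ)) / kk d s ((i1 : ℕ)))
            + (v i0 - ((s i0 : ℝ) - 1)) * (S d s ((i0 : ℕ) + 2) / kk d s ((i0 : ℕ) + 1))
          = ((v i0 - ((s i0 : ℝ) - 1)) * S d s (m + 2)
              - (v i1 - ((s i1 : ℝ) - 1)) * S d s (m + 1)) / kk d s (m + 1) := by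
        show -(v i1 - ((s i1 : ℝ) - 1)) * (S d s (m + 1) / kk d s (m + 1))
            + (v i0 - ((s i0 : ℝ) - 1)) * (S d s (m + 2) / kk d s (m + 1)) = _
        ring
      rw [eq1, div_le_one hk, hkk, hs0, hs1]
      nlinarith


lemma kk_zero (hd : 0 < d) (h1 : s ⟨0, hd⟩ = 2) : kk d s 0 = 1 := by
  rw [kk, show (0 + 1 : ℕ) = 0 + 1 from rfl, S_succ hd, S_zero, h1]
  norm_num

lemma kk_cast (hinc : StrictMono s) {m : ℕ} (hm : m + 1 < d) :
    kk d s (m + 1) = ((s ⟨m + 1, hm⟩ - s ⟨m, by omega⟩ : ℕ) : ℝ) := by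
  rw [kk, S_succ hm, S_succ (show m < d by omega),
    Nat.cast_sub (le_of_lt (hinc (show (⟨m, by omega⟩ : Fin d) < ⟨m + 1, hm⟩ by
      simp [Fin.lt_def])))]

lemma kk_nat_pos (hinc : StrictMono s) {m : ℕ} (hm : m + 1 < d) :
    0 < s ⟨m + 1, hm⟩ - s ⟨m, by omega⟩ :=
  Nat.sub_pos_of_lt (hinc (show (⟨m, by omega⟩ : Fin d) < ⟨m + 1, hm⟩ by simp [Fin.lt_def]))

lemma cast_div_eq (K c : ℕ) (hK : 0 < K) : ((K * c : ℕ) : ℝ) / (K : ℝ) = (c : ℝ) := by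
  have hne : (K : ℝ) ≠ 0 := by exact_mod_cast hK.ne'
  push_cast
  rw [mul_comm, mul_div_assoc, div_self hne, mul_one]

lemma av_lattice (hd : 0 < d) (hpos : ∀ i, 0 < s i) (hinc : StrictMono s)
    (h1 : s ⟨0, hd⟩ = 2)
    (hdvd : ∀ i : Fin d, ∀ hi : (i : ℕ) + 1 < d,
      (s ⟨(i : ℕ) + 1, hi⟩ - s i) ∣ s i ∧ (s ⟨(i : ℕ) + 1, hi⟩ - s i) ∣ s ⟨(i : ℕ) + 1, hi⟩)
    (f : Fin (d + 1)) : av d s f ∈ latticePoints d := by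
  intro i
  by_cases hfi : (f : ℕ) = (i : ℕ)
  · have hval : av d s f i = -(S d s (i : ℕ)) / kk d s (i : ℕ) := by
      simp only [av]
      rw [if_pos hfi, if_neg (by omega)]
      ring
    rcases Nat.eq_zero_or_pos (i : ℕ) with hz | hip
    · refine ⟨-1, ?_⟩
      rw [hval, hz, S_zero, kk_zero hd h1]
      norm_num
    · obtain ⟨m, hm⟩ : ∃ m, (i : ℕ) = m + 1 := ⟨(i : ℕ) - 1, by omega⟩
      have hm1 : m + 1 < d := by have := i.isLt; omega
      have hmd : m < d := by omega
      obtain ⟨c, hc⟩ := (hdvd ⟨m, hmd⟩ hm1).1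
      refine ⟨-(c : ℤ), ?_⟩
      have hK : 0 < s ⟨m + 1, hm1⟩ - s ⟨m, hmd⟩ :=
        Nat.sub_pos_of_lt (hinc (show (⟨m, hmd⟩ : Fin d) < ⟨m + 1, hm1⟩ by simp [Fin.lt_def]))
      have hKr : kk d s (m + 1) = ((s ⟨m + 1, hm1⟩ - s ⟨m, hmd⟩ : ℕ) : ℝ) := by
        rw [kk, S_succ hm1, S_succ hmd, Nat.cast_sub (Nat.le_of_lt
          (hinc (show (⟨m, hmd⟩ : Fin d) < ⟨m + 1, hm1⟩ by simp [Fin.lt_def])))]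
      have e2 : ((s ⟨m, hmd⟩ : ℕ) : ℝ) = (((s ⟨m + 1, hm1⟩ - s ⟨m, hmd⟩) * c : ℕ) : ℝ) :=
        congrArg _ hc
      rw [hval, hm, hKr, S_succ hmd, neg_div, e2, cast_div_eq _ _ hK]
      push_cast
      ring
  · by_cases hfi2 : (f : ℕ) = (i : ℕ) + 1
    · have hval : av d s f i
          = (if (i : ℕ) + 1 = d then 1 else S d s ((i : ℕ) + 2) / kk d s ((i : ℕ) + 1)) := by
        simp only [av]
        rw [if_neg (fun h => hfi h), if_pos hfi2]
        ring
      by_cases hde : (i : ℕ) + 1 = d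
      · exact ⟨1, by rw [hval, if_pos hde]; norm_num⟩
      · have hm1 : (i : ℕ) + 1 < d := by have := i.isLt; omega
        obtain ⟨c, hc⟩ := (hdvd i hm1).2
        refine ⟨(c : ℤ), ?_⟩
        have hK : 0 < s ⟨(i : ℕ) + 1, hm1⟩ - s i :=
          Nat.sub_pos_of_lt (hinc (show i < (⟨(i : ℕ) + 1, hm1⟩ : Fin d) by simp [Fin.lt_def]))
        have hKr : kk d s ((i : ℕ) + 1) = ((s ⟨(i : ℕ) + 1, hm1⟩ - s i : ℕ) : ℝ) := by
          rw [kk, S_succ hm1, show S d s ((i : ℕ) + 1) = (s i : ℝ) from (s_cast i).symm,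
            Nat.cast_sub (Nat.le_of_lt
              (hinc (show i < (⟨(i : ℕ) + 1, hm1⟩ : Fin d) by simp [Fin.lt_def])))]
        have e2 : ((s ⟨(i : ℕ) + 1, hm1⟩ : ℕ) : ℝ)
            = (((s ⟨(i : ℕ) + 1, hm1⟩ - s i) * c : ℕ) : ℝ) := congrArg _ hc
        rw [hval, if_neg hde, hKr, show ((i : ℕ) + 2) = ((i : ℕ) + 1) + 1 from rfl,
          S_succ hm1, e2, cast_div_eq _ _ hK]
        norm_num
    · refine ⟨0, ?_⟩
      simp only [av]
      rw [if_neg (fun h => hfi h), if_neg (fun h => hfi2 h)]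
      norm_num


lemma kk_cast2 (hinc : StrictMono s) (i : Fin d) (hm1 : (i : ℕ) + 1 < d) :
    kk d s ((i : ℕ) + 1) = ((s ⟨(i : ℕ) + 1, hm1⟩ - s i : ℕ) : ℝ) := by
  rw [kk, S_succ hm1, show S d s ((i : ℕ) + 1) = (s i : ℝ) from (s_cast i).symm,
    Nat.cast_sub (Nat.le_of_lt
      (hinc (show i < (⟨(i : ℕ) + 1, hm1⟩ : Fin d) by simp [Fin.lt_def])))]

lemma lam_av_self (hd : 0 < d) (hpos : ∀ i, 0 < s i) (hinc : StrictMono s)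
    (h1 : s ⟨0, hd⟩ = 2) {m : ℕ} (hm1 : m + 1 < d) (F : Fin (d + 1))
    (hFm : (F : ℕ) = m + 1) : lam d s F (av d s F) = 1 := by
  have hmd : m < d := by omega
  have e0 : ∀ j : Fin d, wv d s F j * av d s F j
      = (if (j : ℕ) = m + 1 then wv d s F j * (-(S d s (j : ℕ)) / kk d s (j : ℕ)) else 0)
        + (if (j : ℕ) = m then wv d s F j * (S d s ((j : ℕ) + 2) / kk d s ((j : ℕ) + 1)) else 0) := by
    intro j
    simp only [av, hFm]
    split_ifs <;> first | ring1 | contradiction | (exfalso; omega)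
  have hv1 : ((⟨m + 1, hm1⟩ : Fin d) : ℕ) = m + 1 := rfl
  have hv0 : ((⟨m, hmd⟩ : Fin d) : ℕ) = m := rfl
  have hphi : phi d s F (av d s F)
      = wv d s F ⟨m + 1, hm1⟩ * (-(S d s (m + 1)) / kk d s (m + 1))
        + wv d s F ⟨m, hmd⟩ * (S d s (m + 2) / kk d s (m + 1)) := by
    unfold phi
    rw [Finset.sum_congr rfl fun j _ => e0 j, Finset.sum_add_distrib,
      sum_ite_coe (m + 1) hm1, sum_ite_coe m hmd]
  have hw1 : wv d s F ⟨m + 1, hm1⟩ = 1 := by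
    simp only [wv, Wv, hv1]
    rw [if_pos (show (F : ℕ) ≤ m + 1 by omega)]
    ring
  have hw0 : wv d s F ⟨m, hmd⟩ = 1 - S d s (m + 1) := by
    simp only [wv, Wv, hv0]
    rw [if_neg (show ¬ (F : ℕ) ≤ m by omega)]
    ring
  have ha : 0 < S d s (m + 1) := S_pos hpos _
  have hb : 0 < S d s (m + 2) := S_pos hpos _
  have hab : S d s (m + 1) < S d s (m + 2) := S_lt hd hinc h1 hm1
  unfold lam
  rw [hphi, hw1, hw0, show kk d s (m + 1) = S d s (m + 2) - S d s (m + 1) from rfl]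
  simp only [mu, hFm, munat, if_neg (show ¬ m + 1 = d by omega)]
  have h2 : S d s (m + 2) - S d s (m + 1) ≠ 0 := by linarith
  field_simp
  ring

end Stmt2Aux

open Stmt2Aux in
/-- for strictly increasing `s` with `s_1 = 2`, `s_{i+1} ≤ 2 s_i`,
and `Q = P_d^(s) - p` with `p = (s_1 - 1, …, s_d - 1)`, the dual `Q^∨` is a
lattice polytope iff `k_i = s_{i+1} - s_i` divides `s_i` and `s_{i+1}` for all
`i`. -/
theorem stmt_2 (d : ℕ) (hd : 0 < d) (s : Fin d → ℕ) (hpos : ∀ i, 0 < s i)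
    (hinc : StrictMono s) (h1 : s ⟨0, hd⟩ = 2)
    (h2 : ∀ i : Fin d, ∀ hi : (i : ℕ) + 1 < d, s ⟨(i : ℕ) + 1, hi⟩ ≤ 2 * s i) :
    (dualPolytope ((fun x (i : Fin d) => x i - ((s i : ℝ) - 1)) '' lectureHall d s) =
        convexHull ℝ
          (dualPolytope ((fun x (i : Fin d) => x i - ((s i : ℝ) - 1)) '' lectureHall d s) ∩
            latticePoints d)) ↔
      ∀ i : Fin d, ∀ hi : (i : ℕ) + 1 < d,
        (s ⟨(i : ℕ) + 1, hi⟩ - s i) ∣ s i ∧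
        (s ⟨(i : ℕ) + 1, hi⟩ - s i) ∣ s ⟨(i : ℕ) + 1, hi⟩ := by
  classical
  set Q : Set (Fin d → ℝ) :=
    (fun x (i : Fin d) => x i - ((s i : ℝ) - 1)) '' lectureHall d s with hQ
  have hlam_nonneg : ∀ y ∈ dualPolytope Q, ∀ g : Fin (d + 1), 0 ≤ lam d s g y := by
    intro y hy g
    have hphile : phi d s g y ≤ 1 := hy (wv d s g) (wv_mem hpos g)
    exact mul_nonneg (mu_pos hd hpos hinc h1 g).le (by linarith)
  have hlam_le : ∀ y ∈ dualPolytope Q, ∀ g : Fin (d + 1), lam d s g y ≤ 1 := by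
    intro y hy g
    have hs := sum_lam hpos y
    have := Finset.single_le_sum (f := fun g => lam d s g y)
      (fun g' _ => hlam_nonneg y hy g') (Finset.mem_univ g)
    linarith
  constructor
  · intro hL i hi
    set F : Fin (d + 1) := ⟨(i : ℕ) + 1, by omega⟩ with hF
    have hFm : (F : ℕ) = (i : ℕ) + 1 := rfl
    have hin : av d s F ∈ convexHull ℝ (dualPolytope Q ∩ latticePoints d) := by
      rw [← hL]; exact av_mem_dual hd hpos hinc h1 F
    rw [convexHull_eq] at hin
    obtain ⟨ι, t, c, z, hc0, hc1, hzm, hcz⟩ := hin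
    rw [Finset.centerMass_eq_of_sum_1 _ _ hc1] at hcz
    have hz_dual : ∀ r ∈ t, z r ∈ dualPolytope Q := fun r hr => (hzm r hr).1
    -- affinity of lam F
    have hphi_lin : phi d s F (∑ r ∈ t, c r • z r) = ∑ r ∈ t, c r * phi d s F (z r) := by
      unfold phi
      calc ∑ j : Fin d, wv d s F j * (∑ r ∈ t, c r • z r) j
          = ∑ j : Fin d, ∑ r ∈ t, wv d s F j * (c r * z r j) := by
            apply Finset.sum_congr rfl
            intro j _
            rw [Finset.sum_apply, Finset.mul_sum]
            apply Finset.sum_congr rfl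
            intro r _
            simp only [Pi.smul_apply, smul_eq_mul]
        _ = ∑ r ∈ t, ∑ j : Fin d, wv d s F j * (c r * z r j) := Finset.sum_comm
        _ = ∑ r ∈ t, c r * ∑ j : Fin d, wv d s F j * z r j := by
            apply Finset.sum_congr rfl
            intro r _
            rw [Finset.mul_sum]
            apply Finset.sum_congr rfl
            intro j _
            ring
    have hlam_cm : lam d s F (av d s F) = ∑ r ∈ t, c r * lam d s F (z r) := by
      rw [← hcz]
      unfold lam
      rw [hphi_lin]
      have e1 : (∑ r ∈ t, c r) - ∑ r ∈ t, c r * phi d s F (z r)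
          = ∑ r ∈ t, c r * (1 - phi d s F (z r)) := by
        rw [← Finset.sum_sub_distrib]
        apply Finset.sum_congr rfl
        intro r _
        ring
      calc mu d s F * (1 - ∑ r ∈ t, c r * phi d s F (z r))
          = mu d s F * ((∑ r ∈ t, c r) - ∑ r ∈ t, c r * phi d s F (z r)) := by rw [hc1]
        _ = mu d s F * ∑ r ∈ t, c r * (1 - phi d s F (z r)) := by rw [e1]
        _ = ∑ r ∈ t, c r * (mu d s F * (1 - phi d s F (z r))) := by
            rw [Finset.mul_sum]
            apply Finset.sum_congr rfl
            intro r _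
            ring
    have hlamF1 : lam d s F (av d s F) = 1 := lam_av_self hd hpos hinc h1 hi F hFm
    have key : ∀ r ∈ t, c r * (1 - lam d s F (z r)) = 0 := by
      apply (Finset.sum_eq_zero_iff_of_nonneg ?_).1
      · rw [show (∑ r ∈ t, c r * (1 - lam d s F (z r)))
            = (∑ r ∈ t, c r) - ∑ r ∈ t, c r * lam d s F (z r) by
          rw [← Finset.sum_sub_distrib]
          exact Finset.sum_congr rfl fun r _ => by ring]
        rw [hc1, ← hlam_cm, hlamF1, sub_self]
      · intro r hr
        exact mul_nonneg (hc0 r hr)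
          (sub_nonneg.2 (hlam_le (z r) (hz_dual r hr) F))
    obtain ⟨r, hr, hcr⟩ : ∃ r ∈ t, 0 < c r := by
      by_contra hno
      push_neg at hno
      have : ∑ r ∈ t, c r ≤ 0 := Finset.sum_nonpos fun r hr => hno r hr
      rw [hc1] at this
      linarith
    have hlamr : lam d s F (z r) = 1 := by
      rcases mul_eq_zero.1 (key r hr) with h | h
      · exact absurd h (ne_of_gt hcr)
      · linarith
    have hothers : ∀ g : Fin (d + 1), g ≠ F → lam d s g (z r) = 0 := by
      have hsum := sum_lam hpos (z r)
      rw [← Finset.add_sum_erase _ _ (Finset.mem_univ F)] at hsum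
      have hzero : ∑ g ∈ Finset.univ.erase F, lam d s g (z r) = 0 := by
        rw [hlamr] at hsum
        linarith
      intro g hg
      exact (Finset.sum_eq_zero_iff_of_nonneg
        (fun g' _ => hlam_nonneg (z r) (hz_dual r hr) g')).1 hzero g
        (Finset.mem_erase.2 ⟨hg, Finset.mem_univ g⟩)
    have hz_eq : z r = av d s F := by
      funext j
      have hj := sum_lam_av hd hpos hinc h1 (z r) j
      rw [← Finset.add_sum_erase _ _ (Finset.mem_univ F)] at hj
      have hzer : ∑ g ∈ Finset.univ.erase F, lam d s g (z r) * av d s g j = 0 :=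
        Finset.sum_eq_zero fun g hg => by
          rw [hothers g (Finset.mem_erase.1 hg).1, zero_mul]
      rw [hzer, add_zero, hlamr, one_mul] at hj
      exact hj.symm
    have hlat : av d s F ∈ latticePoints d := hz_eq ▸ (hzm r hr).2
    -- extract divisibility
    have hK : 0 < s ⟨(i : ℕ) + 1, hi⟩ - s i :=
      Nat.sub_pos_of_lt (hinc (show i < (⟨(i : ℕ) + 1, hi⟩ : Fin d) by simp [Fin.lt_def]))
    have hKne : ((s ⟨(i : ℕ) + 1, hi⟩ - s i : ℕ) : ℝ) ≠ 0 := by exact_mod_cast hK.ne'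
    have hKr : kk d s ((i : ℕ) + 1) = ((s ⟨(i : ℕ) + 1, hi⟩ - s i : ℕ) : ℝ) :=
      kk_cast2 hinc i hi
    constructor
    · -- use coordinate (i+1) : value -(s i)/K
      obtain ⟨n, hn⟩ := hlat ⟨(i : ℕ) + 1, hi⟩
      have hval : av d s F ⟨(i : ℕ) + 1, hi⟩
          = -(S d s ((i : ℕ) + 1)) / kk d s ((i : ℕ) + 1) := by
        show (if (F : ℕ) = (i : ℕ) + 1 then
            -(S d s ((i : ℕ) + 1)) / kk d s ((i : ℕ) + 1) else 0)
          + (if (F : ℕ) = (i : ℕ) + 1 + 1 then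
            (if (i : ℕ) + 1 + 1 = d then 1
              else S d s ((i : ℕ) + 1 + 2) / kk d s ((i : ℕ) + 1 + 1)) else 0)
          = -(S d s ((i : ℕ) + 1)) / kk d s ((i : ℕ) + 1)
        rw [if_pos hFm, if_neg (by omega)]
        ring
      rw [hval, hKr, show S d s ((i : ℕ) + 1) = (s i : ℝ) from (s_cast i).symm] at hn
      have hsi : (s i : ℝ) = (-n : ℝ) * ((s ⟨(i : ℕ) + 1, hi⟩ - s i : ℕ) : ℝ) := by
        field_simp at hn
        linarith
      have hz : (s i : ℤ) = (s ⟨(i : ℕ) + 1, hi⟩ - s i : ℕ) * (-n) := by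
        exact_mod_cast hsi.trans
          (mul_comm (-n : ℝ) (((s ⟨(i : ℕ) + 1, hi⟩ - s i : ℕ) : ℝ)))
      have : ((s ⟨(i : ℕ) + 1, hi⟩ - s i : ℕ) : ℤ) ∣ (s i : ℤ) := ⟨-n, hz⟩
      exact_mod_cast this
    · -- use coordinate i : value s(i+1)/K
      obtain ⟨n, hn⟩ := hlat i
      have hval : av d s F i = S d s ((i : ℕ) + 2) / kk d s ((i : ℕ) + 1) := by
        show (if (F : ℕ) = (i : ℕ) then -(S d s ((i : ℕ))) / kk d s ((i : ℕ)) else 0)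
          + (if (F : ℕ) = (i : ℕ) + 1 then
            (if (i : ℕ) + 1 = d then 1
              else S d s ((i : ℕ) + 2) / kk d s ((i : ℕ) + 1)) else 0)
          = S d s ((i : ℕ) + 2) / kk d s ((i : ℕ) + 1)
        rw [if_neg (by omega), if_pos hFm, if_neg (by omega)]
        ring
      rw [hval, hKr, show ((i : ℕ) + 2) = ((i : ℕ) + 1) + 1 from rfl, S_succ hi] at hn
      have hsi : (s ⟨(i : ℕ) + 1, hi⟩ : ℝ)
          = (n : ℝ) * ((s ⟨(i : ℕ) + 1, hi⟩ - s i : ℕ) : ℝ) := by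
        field_simp at hn
        linarith
      have hz : (s ⟨(i : ℕ) + 1, hi⟩ : ℤ) = (s ⟨(i : ℕ) + 1, hi⟩ - s i : ℕ) * n := by
        exact_mod_cast hsi.trans
          (mul_comm (n : ℝ) (((s ⟨(i : ℕ) + 1, hi⟩ - s i : ℕ) : ℝ)))
      have : ((s ⟨(i : ℕ) + 1, hi⟩ - s i : ℕ) : ℤ) ∣ (s ⟨(i : ℕ) + 1, hi⟩ : ℤ) := ⟨n, hz⟩
      exact_mod_cast this
  · intro hdvd
    apply Set.Subset.antisymm
    · intro y hy
      have hsum := sum_lam hpos y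
      have hmem : ∀ g : Fin (d + 1), av d s g ∈ dualPolytope Q ∩ latticePoints d :=
        fun g => ⟨av_mem_dual hd hpos hinc h1 g, av_lattice hd hpos hinc h1 hdvd g⟩
      have hcm := Finset.centerMass_mem_convexHull (Finset.univ : Finset (Fin (d + 1)))
        (fun g _ => hlam_nonneg y hy g) (by rw [hsum]; norm_num) (fun g _ => hmem g)
      rw [Finset.centerMass_eq_of_sum_1 _ _ hsum] at hcm
      have hrep : y = ∑ g : Fin (d + 1), lam d s g y • av d s g := by
        funext j
        rw [Finset.sum_apply]
        simp only [Pi.smul_apply, smul_eq_mul]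
        exact (sum_lam_av hd hpos hinc h1 y j).symm
      rw [hrep]
      exact hcm
    · exact convexHull_min Set.inter_subset_left dual_convex
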